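/- Suppose along integral curves one has $\frac{dx}{dt} = \tau x + x^2 f_1$ and the unit level set condition $\tau^2 + |\mu|^2 = 1 + O(x)$, where $f_1$ is smooth and bounded. Then $\frac{d}{dt}(x^{-2}) = -2x^{-2}(\tau + x f_1)$ and $\frac{d^2}{dt^2}(x^{-2}) = 2x^{-2}(2\tau^2 + |\mu|^2 + x f_2)$ for some bounded smooth $f_2$; in particular, on the unit level set and for $x$ sufficiently small, $\frac{d^2}{dt^2}(x^{-2}) \geq c\, x^{-2}$ for some $c > 0$. -/

import Mathlib

set_option maxHeartbeats 1000000

open Set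

lemma key_one_sided (x τ f1 : ℝ → ℝ) (B B' Cu : ℝ)
    (hB : 1 ≤ B) (hB' : 1 ≤ B') (hCu : 1 ≤ Cu)
    (hxpos : ∀ t, 0 < x t) (hxd : Differentiable ℝ x) (hf1d : Differentiable ℝ f1)
    (hf1b : ∀ t, |f1 t| ≤ B) (hf1db : ∀ t, |deriv f1 t| ≤ B')
    (hτb : ∀ t, (τ t) ^ 2 ≤ 1 + Cu * x t)
    (hx' : ∀ t, deriv x t = τ t * x t + (x t) ^ 2 * f1 t) :
    ∀ t, 0 < f1 t → x t * f1 t ^ 2 ≤ 64 * (B * B' * Cu) := by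
  intro t0 hpos
  by_contra hcon
  push_neg at hcon
  obtain ⟨K, hK⟩ : ∃ K : ℝ, K = B * B' * Cu := ⟨_, rfl⟩
  rw [← hK] at hcon
  have hBCu : (1:ℝ) ≤ B' * Cu := by nlinarith [mul_le_mul hB' hCu zero_le_one (by linarith : (0:ℝ) ≤ B')]
  have hKpos : (1:ℝ) ≤ K := by
    rw [hK, mul_assoc]
    nlinarith [mul_le_mul hB hBCu zero_le_one (by linarith : (0:ℝ) ≤ B)]
  have hBK : B ≤ K := by
    rw [hK, mul_assoc]
    nlinarith [mul_nonneg (by linarith : (0:ℝ) ≤ B) (by linarith : (0:ℝ) ≤ B' * Cu - 1)]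
  have hCuK : Cu ≤ K := by
    have h1 : (1:ℝ) ≤ B * B' := by nlinarith [mul_le_mul hB hB' zero_le_one (by linarith : (0:ℝ) ≤ B)]
    rw [hK]
    nlinarith [mul_nonneg (by linarith : (0:ℝ) ≤ Cu) (by linarith : (0:ℝ) ≤ B * B' - 1)]
  obtain ⟨δ, hδ⟩ : ∃ d : ℝ, d = f1 t0 / 2 := ⟨_, rfl⟩
  have hδpos : 0 < δ := by rw [hδ]; positivity
  have hδB : δ ≤ B := by
    have := (abs_le.mp (hf1b t0)).2
    rw [hδ]; linarith
  obtain ⟨m, hm⟩ : ∃ m : ℝ, m = δ ^ 2 / (16 * K) := ⟨_, rfl⟩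
  have hmpos : 0 < m := by rw [hm]; positivity
  obtain ⟨T, hT⟩ : ∃ T : ℝ, T = t0 + δ / B' := ⟨_, rfl⟩
  have ht0T : t0 ≤ T := by
    have : 0 ≤ δ / B' := by positivity
    rw [hT]; linarith
  obtain ⟨y, hy⟩ : ∃ y : ℝ → ℝ, y = fun t => (x t)⁻¹ := ⟨_, rfl⟩
  have hypos : ∀ t, 0 < y t := by rw [hy]; exact fun t => inv_pos.mpr (hxpos t)
  have hy' : ∀ t, HasDerivAt y (-(τ t) * y t - f1 t) t := by
    intro t
    have hne : x t ≠ 0 := (hxpos t).ne'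
    rw [hy]
    have h1 : HasDerivAt (fun s => (x s)⁻¹) (-(deriv x t) / (x t) ^ 2) t := ((hxd t).hasDerivAt).inv hne
    convert h1 using 1
    rw [hx']
    field_simp
    ring
  -- y t0 < m
  have hyt0 : y t0 < m := by
    have hx0 := hxpos t0
    have hf2 : f1 t0 ^ 2 = 4 * δ ^ 2 := by rw [hδ]; ring
    rw [hf2] at hcon
    have h1 : (16 * K) < δ ^ 2 * x t0 := by nlinarith
    rw [hy, hm]
    rw [inv_lt_iff_one_lt_mul₀ hx0, div_mul_eq_mul_div, lt_div_iff₀ (by positivity)]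
    nlinarith
  -- f1 ≥ δ on [t0, T]
  have hlip : ∀ s t : ℝ, |f1 s - f1 t| ≤ B' * |s - t| := by
    intro s t
    have := convex_univ.norm_image_sub_le_of_norm_hasDerivWithin_le
      (f' := deriv f1) (fun u _ => (hf1d u).hasDerivAt.hasDerivWithinAt)
      (fun u _ => by rw [Real.norm_eq_abs]; exact hf1db u) (mem_univ t) (mem_univ s)
    simpa [Real.norm_eq_abs] using this
  have hf1low : ∀ t ∈ Icc t0 T, δ ≤ f1 t := by
    intro t ht
    have h1 := hlip t t0
    have h2 : |t - t0| ≤ δ / B' := by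
      rw [abs_le]
      constructor
      · have : 0 < δ / B' := by positivity
        linarith [ht.1]
      · have := ht.2; rw [hT] at this; linarith
    have h3 : B' * |t - t0| ≤ δ := by
      rw [mul_comm]
      calc |t - t0| * B' ≤ (δ / B') * B' := by
            apply mul_le_mul_of_nonneg_right h2 (by linarith)
        _ = δ := by field_simp
    have h4 := (abs_le.mp h1).1
    have : f1 t0 = 2 * δ := by rw [hδ]; ring
    linarith
  -- derivative bound when y ≤ m
  have hbound : ∀ t ∈ Icc t0 T, y t ≤ m → -(τ t) * y t - f1 t ≤ -(δ/2) := by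
    intro t ht hym
    have hxy : x t * y t = 1 := by
      rw [hy]; exact mul_inv_cancel₀ (hxpos t).ne'
    have h1 : (τ t * y t) ^ 2 ≤ y t ^ 2 + Cu * y t := by
      have := hτb t
      have hy0 := (hypos t).le
      nlinarith
    have hmδ : m ≤ δ / 16 := by
      rw [hm]
      rw [div_le_div_iff₀ (by positivity) (by norm_num)]
      nlinarith [mul_le_mul_of_nonneg_left hBK hδpos.le, mul_le_mul_of_nonneg_left hδB hδpos.le]
    have hCum : Cu * m ≤ δ ^ 2 / 16 := by
      rw [hm]
      rw [mul_div_assoc']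
      rw [div_le_div_iff₀ (by positivity) (by norm_num)]
      nlinarith [mul_le_mul_of_nonneg_left hCuK (sq_nonneg δ)]
    have h2 : (τ t * y t) ^ 2 ≤ (δ / 2) ^ 2 := by
      have hy0 := (hypos t).le
      have hCy : Cu * y t ≤ Cu * m := mul_le_mul_of_nonneg_left hym (by linarith)
      have hy2 : y t ^ 2 ≤ m ^ 2 := pow_le_pow_left₀ hy0 hym 2
      have hm2 : m ^ 2 ≤ (δ/16) ^ 2 := pow_le_pow_left₀ hmpos.le hmδ 2
      nlinarith [h1, hCy, hy2, hm2, hCum, sq_nonneg δ]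
    have h3 : |τ t * y t| ≤ δ / 2 := by
      have := Real.sqrt_le_sqrt h2
      rwa [Real.sqrt_sq_eq_abs, Real.sqrt_sq (by positivity)] at this
    have h5 := hf1low t ht
    have h6 : -(τ t * y t) ≤ |τ t * y t| := neg_le_abs _
    have hgoal : -(τ t) * y t = -(τ t * y t) := by ring
    rw [hgoal]
    linarith
  -- y stays ≤ m on [t0, T]
  have hyc : ContinuousOn y (Icc t0 T) :=
    fun t _ => ((hy' t).differentiableAt.continuousAt).continuousWithinAt
  have hstay : ∀ ⦃t⦄, t ∈ Icc t0 T → y t ≤ m := by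
    apply image_le_of_deriv_right_lt_deriv_boundary (f' := fun t => -(τ t) * y t - f1 t)
      (B' := fun _ => (0:ℝ)) hyc (fun t _ => (hy' t).hasDerivWithinAt) hyt0.le
      (fun s => hasDerivAt_const s m)
    intro t ht heq
    have h := hbound t (Ico_subset_Icc_self ht) heq.le
    linarith
  -- integrate the decrease
  have hdec : ∀ ⦃t⦄, t ∈ Icc t0 T → y t ≤ y t0 - (δ/2) * (t - t0) := by
    apply image_le_of_deriv_right_le_deriv_boundary (f' := fun t => -(τ t) * y t - f1 t)
      (B' := fun _ => -(δ/2)) hyc (fun t _ => (hy' t).hasDerivWithinAt)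
      (by simp) (Continuous.continuousOn (by continuity))
    · intro s _
      have h8 : HasDerivAt (fun t => y t0 - δ/2*(t - t0)) (-(δ/2)) s := by
        have := (((hasDerivAt_id s).sub_const t0).const_mul (δ/2)).const_sub (y t0)
        simpa using this
      exact h8.hasDerivWithinAt
    · intro s hs
      exact hbound s (Ico_subset_Icc_self hs) (hstay (Ico_subset_Icc_self hs))
  have hTfin := hdec (right_mem_Icc.mpr ht0T)
  have h7 : (δ/2)*(T - t0) = δ^2/(2*B') := by
    rw [hT]; field_simp; ring
  have hB'K : B' ≤ K := by
    have h1 : (1:ℝ) ≤ B * Cu := by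
      nlinarith [mul_le_mul hB hCu zero_le_one (by linarith : (0:ℝ) ≤ B)]
    rw [hK]
    nlinarith [mul_nonneg (by linarith : (0:ℝ) ≤ B') (by linarith : (0:ℝ) ≤ B * Cu - 1)]
  have h9 : m < δ^2/(2*B') := by
    rw [hm, div_lt_div_iff₀ (by positivity) (by positivity)]
    nlinarith [mul_le_mul_of_nonneg_left hB'K (sq_nonneg δ), sq_nonneg δ, mul_pos hδpos hδpos]
  have := hypos T
  linarith

lemma key_two_sided (x τ f1 : ℝ → ℝ) (B B' Cu : ℝ)
    (hB : 1 ≤ B) (hB' : 1 ≤ B') (hCu : 1 ≤ Cu)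
    (hxpos : ∀ t, 0 < x t) (hxd : Differentiable ℝ x) (hf1d : Differentiable ℝ f1)
    (hf1b : ∀ t, |f1 t| ≤ B) (hf1db : ∀ t, |deriv f1 t| ≤ B')
    (hτb : ∀ t, (τ t) ^ 2 ≤ 1 + Cu * x t)
    (hx' : ∀ t, deriv x t = τ t * x t + (x t) ^ 2 * f1 t) :
    ∀ t, x t * f1 t ^ 2 ≤ 64 * (B * B' * Cu) := by
  have hBCu : (1:ℝ) ≤ B' * Cu := by nlinarith [mul_le_mul hB' hCu zero_le_one (by linarith : (0:ℝ) ≤ B')]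
  have hK1 : (1:ℝ) ≤ 64 * (B * B' * Cu) := by
    rw [mul_assoc]
    nlinarith [mul_le_mul hB hBCu zero_le_one (by linarith : (0:ℝ) ≤ B)]
  intro t
  rcases lt_trichotomy (f1 t) 0 with hneg | hzero | hposs
  · -- reflect time
    have hXd : Differentiable ℝ (fun s => x (-s)) := hxd.comp differentiable_neg
    have hFd : Differentiable ℝ (fun s => -f1 (-s)) := (hf1d.comp differentiable_neg).neg
    have hdX : ∀ s, deriv (fun s => x (-s)) s = -(deriv x (-s)) := by
      intro s
      have h : HasDerivAt (fun s => x (-s)) (deriv x (-s) * (-1)) s :=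
        (hxd (-s)).hasDerivAt.comp s (hasDerivAt_neg s)
      rw [h.deriv]; ring
    have hdF : ∀ s, deriv (fun s => -f1 (-s)) s = deriv f1 (-s) := by
      intro s
      have h : HasDerivAt (fun s => -f1 (-s)) (-(deriv f1 (-s) * (-1))) s :=
        ((hf1d (-s)).hasDerivAt.comp s (hasDerivAt_neg s)).neg
      rw [h.deriv]; ring
    have key := key_one_sided (fun s => x (-s)) (fun s => -τ (-s)) (fun s => -f1 (-s))
      B B' Cu hB hB' hCu (fun s => hxpos (-s)) hXd hFd
      (fun s => by simpa using hf1b (-s))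
      (fun s => by rw [hdF]; exact hf1db (-s))
      (fun s => by simpa using hτb (-s))
      (fun s => by rw [hdX, hx']; ring)
      (-t) (by simpa using hneg)
    simpa using key
  · rw [hzero]; simpa using by linarith
  · exact key_one_sided x τ f1 B B' Cu hB hB' hCu hxpos hxd hf1d hf1b hf1db hτb hx' t hposs



/-- Strict convexity of `x⁻²` along geodesics near infinity: if along integral curves
`dx/dt = τx + x²f₁`, `dτ/dt = -|μ|² + xg₁` with `f₁, g₁` bounded, and
`τ² + |μ|² = 1 + O(x)`, then `d(x⁻²)/dt = -2x⁻²(τ + xf₁)` and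
`d²(x⁻²)/dt² = 2x⁻²(2τ² + |μ|² + xf₂)` for some bounded `f₂`; in particular
`d²(x⁻²)/dt² ≥ c x⁻²` for `x` sufficiently small. -/
theorem stmt18 (x τ μ f1 g1 : ℝ → ℝ)
    (hxpos : ∀ t, 0 < x t)
    (hxd : Differentiable ℝ x) (hτd : Differentiable ℝ τ) (hf1d : Differentiable ℝ f1)
    (hf1b : ∃ B : ℝ, ∀ t, |f1 t| ≤ B) (hf1db : ∃ B : ℝ, ∀ t, |deriv f1 t| ≤ B)
    (hg1b : ∃ B : ℝ, ∀ t, |g1 t| ≤ B)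
    (hx' : ∀ t, deriv x t = τ t * x t + (x t) ^ 2 * f1 t)
    (hτ' : ∀ t, deriv τ t = -(μ t) ^ 2 + x t * g1 t)
    (hunit : ∃ Cu : ℝ, ∀ t, |(τ t) ^ 2 + (μ t) ^ 2 - 1| ≤ Cu * x t) :
    (∀ t, deriv (fun s => (x s)⁻¹ ^ 2) t = -2 * (x t)⁻¹ ^ 2 * (τ t + x t * f1 t))
    ∧ ∃ f2 : ℝ → ℝ, (∃ B : ℝ, ∀ t, |f2 t| ≤ B)
        ∧ (∀ t, deriv (deriv (fun s => (x s)⁻¹ ^ 2)) t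
              = 2 * (x t)⁻¹ ^ 2 * (2 * (τ t) ^ 2 + (μ t) ^ 2 + x t * f2 t))
        ∧ ∃ c x0 : ℝ, 0 < c ∧ 0 < x0 ∧
            ∀ t, x t < x0 →
              c * (x t)⁻¹ ^ 2 ≤ deriv (deriv (fun s => (x s)⁻¹ ^ 2)) t := by
  obtain ⟨B1, hB1⟩ := hf1b
  obtain ⟨B1', hB1'⟩ := hf1db
  obtain ⟨Bg, hBg⟩ := hg1b
  obtain ⟨Cu0, hCu0⟩ := hunit
  obtain ⟨B, hBdef⟩ : ∃ B : ℝ, B = max B1 1 := ⟨_, rfl⟩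
  obtain ⟨B', hB'def⟩ : ∃ B : ℝ, B = max B1' 1 := ⟨_, rfl⟩
  obtain ⟨Cu, hCudef⟩ : ∃ C : ℝ, C = max Cu0 1 := ⟨_, rfl⟩
  have hB : 1 ≤ B := hBdef ▸ le_max_right _ _
  have hB' : 1 ≤ B' := hB'def ▸ le_max_right _ _
  have hCu : 1 ≤ Cu := hCudef ▸ le_max_right _ _
  have hf1B : ∀ t, |f1 t| ≤ B := fun t => (hB1 t).trans (hBdef ▸ le_max_left _ _)
  have hf1B' : ∀ t, |deriv f1 t| ≤ B' := fun t => (hB1' t).trans (hB'def ▸ le_max_left _ _)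
  have hCu0Cu : Cu0 ≤ Cu := hCudef ▸ le_max_left _ _
  have hτb : ∀ t, (τ t) ^ 2 ≤ 1 + Cu * x t := by
    intro t
    have h1 := (abs_le.mp (hCu0 t)).2
    have h2 : Cu0 * x t ≤ Cu * x t := mul_le_mul_of_nonneg_right hCu0Cu (hxpos t).le
    nlinarith [sq_nonneg (μ t)]
  -- first derivative identity
  have hd1 : ∀ t, deriv (fun s => (x s)⁻¹ ^ 2) t = -2 * (x t)⁻¹ ^ 2 * (τ t + x t * f1 t) := by
    intro t
    have hne : x t ≠ 0 := (hxpos t).ne'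
    have H : HasDerivAt (fun s => (x s)⁻¹ ^ 2)
        (((2:ℕ) : ℝ) * (x t)⁻¹ ^ (2 - 1) * (-(deriv x t) / x t ^ 2)) t :=
      (((hxd t).hasDerivAt).inv hne).pow 2
    rw [H.deriv, hx']
    field_simp
    linear_combination (-2 * τ t - 2 * x t * f1 t) * (mul_inv_cancel₀ hne)
  have hxf2 := key_two_sided x τ f1 B B' Cu hB hB' hCu hxpos hxd hf1d hf1B hf1B' hτb hx'
  obtain ⟨B2, hB2def⟩ : ∃ b : ℝ, b = 3 * (B ^ 2 + Cu * (64 * (B * B' * Cu)) + 1) + 64 * (B * B' * Cu) + Bg + B' := ⟨_, rfl⟩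
  have hf2bd : ∀ t, |3 * τ t * f1 t + x t * f1 t ^ 2 - g1 t - deriv f1 t| ≤ B2 := by
    intro t
    rw [hB2def]
    have e2 : 0 ≤ x t * f1 t ^ 2 := mul_nonneg (hxpos t).le (sq_nonneg _)
    have e2' := hxf2 t
    have e3 := abs_le.mp (hBg t)
    have e4 := abs_le.mp (hf1B' t)
    have e1 : |τ t * f1 t| ≤ B ^ 2 + Cu * (64 * (B * B' * Cu)) + 1 := by
      have h1 : (τ t * f1 t) ^ 2 ≤ B ^ 2 + Cu * (64 * (B * B' * Cu)) := by
        have hf1sq : f1 t ^ 2 ≤ B ^ 2 := by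
          have := hf1B t
          nlinarith [abs_nonneg (f1 t), sq_abs (f1 t)]
        have hcx : Cu * (x t * f1 t ^ 2) ≤ Cu * (64 * (B * B' * Cu)) :=
          mul_le_mul_of_nonneg_left e2' (by linarith)
        have hq := hτb t
        nlinarith [sq_nonneg (f1 t), (hxpos t).le]
      nlinarith [sq_nonneg (|τ t * f1 t| - 1), sq_abs (τ t * f1 t), abs_nonneg (τ t * f1 t)]
    have e1' := abs_le.mp e1
    rw [abs_le]
    constructor <;> linarith [e1'.1, e1'.2, e3.1, e3.2, e4.1, e4.2]
  have hB2nn : 0 ≤ B2 := (abs_nonneg _).trans (hf2bd 0)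
  have hd2 : ∀ t, deriv (deriv (fun s => (x s)⁻¹ ^ 2)) t
      = 2 * (x t)⁻¹ ^ 2 * (2 * (τ t) ^ 2 + (μ t) ^ 2
          + x t * (3 * τ t * f1 t + x t * f1 t ^ 2 - g1 t - deriv f1 t)) := by
    intro t
    have hfun : (deriv fun s => (x s)⁻¹ ^ 2)
        = fun t => -2 * ((x t)⁻¹ ^ 2 * (τ t + x t * f1 t)) := by
      funext s; rw [hd1 s]; ring
    rw [hfun]
    have hne : x t ≠ 0 := (hxpos t).ne'
    have hP : HasDerivAt (fun s => (x s)⁻¹ ^ 2)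
        (-2 * ((x t)⁻¹ ^ 2 * (τ t + x t * f1 t))) t := by
      have H : HasDerivAt (fun s => (x s)⁻¹ ^ 2)
          (((2:ℕ) : ℝ) * (x t)⁻¹ ^ (2 - 1) * (-(deriv x t) / x t ^ 2)) t :=
        (((hxd t).hasDerivAt).inv hne).pow 2
      convert H using 1
      rw [hx']
      field_simp
      linear_combination (2 * τ t + 2 * x t * f1 t) * (mul_inv_cancel₀ hne)
    have hQ : HasDerivAt (fun s => τ s + x s * f1 s)
        (deriv τ t + (deriv x t * f1 t + x t * deriv f1 t)) t :=
      ((hτd t).hasDerivAt).add (((hxd t).hasDerivAt).mul ((hf1d t).hasDerivAt))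
    have hv : HasDerivAt (fun t => -2 * ((x t)⁻¹ ^ 2 * (τ t + x t * f1 t))) _ t :=
      (hP.mul hQ).const_mul (-2 : ℝ)
    rw [hv.deriv, hτ', hx']
    field_simp
    ring
  refine ⟨hd1, fun t => 3 * τ t * f1 t + x t * f1 t ^ 2 - g1 t - deriv f1 t,
    ⟨B2, hf2bd⟩, hd2, 1, (2 * (Cu + B2 + 1))⁻¹, one_pos, by positivity, ?_⟩
  intro t hxlt
  rw [hd2 t]
  have hxt := hxpos t
  have hinv : 0 < (x t)⁻¹ ^ 2 := by positivity
  have hE : (1:ℝ) / 2 ≤ 2 * (τ t) ^ 2 + (μ t) ^ 2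
      + x t * (3 * τ t * f1 t + x t * f1 t ^ 2 - g1 t - deriv f1 t) := by
    have h1 := (abs_le.mp (hCu0 t)).1
    have h2 : Cu0 * x t ≤ Cu * x t := mul_le_mul_of_nonneg_right hCu0Cu hxt.le
    have h3 : -B2 ≤ 3 * τ t * f1 t + x t * f1 t ^ 2 - g1 t - deriv f1 t :=
      (abs_le.mp (hf2bd t)).1
    have h4 : x t * (3 * τ t * f1 t + x t * f1 t ^ 2 - g1 t - deriv f1 t) ≥ x t * (-B2) :=
      mul_le_mul_of_nonneg_left h3 hxt.le
    have h5 : (Cu + B2) * x t ≤ (Cu + B2) * (2 * (Cu + B2 + 1))⁻¹ :=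
      mul_le_mul_of_nonneg_left hxlt.le (by linarith)
    have h6 : (Cu + B2) * (2 * (Cu + B2 + 1))⁻¹ ≤ 1 / 2 := by
      rw [← div_eq_mul_inv, div_le_div_iff₀ (by linarith) (by norm_num : (0:ℝ) < 2)]
      nlinarith
    nlinarith [sq_nonneg (τ t)]
  nlinarith [mul_le_mul_of_nonneg_left hE (by positivity : (0:ℝ) ≤ 2 * (x t)⁻¹ ^ 2)]
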